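/- Let R be a ring, A a finitely presented right R-module and X a pure injective left R-module. Then the abelian group (or left R-module when R is commutative) A ⊗_R X is pure injective (over Z, respectively over R when R is commutative). -/

import Mathlib

universe v

/-- A monomorphism of `R`-modules is pure if tensoring with any module preserves
injectivity. -/
def IsPureMono {R : Type*} [CommRing R] {L M : Type*}
    [AddCommGroup L] [Module R L] [AddCommGroup M] [Module R M]
    (f : L →ₗ[R] M) : Prop :=
  Function.Injective f ∧
    ∀ (X : Type*) [AddCommGroup X] [Module R X],
      Function.Injective (LinearMap.lTensor X f)

/-- A module `M` is pure injective if `Hom(-, M)` sends pure monomorphisms to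
surjections, i.e. every map to `M` extends along any pure monomorphism. -/
def IsPureInjective (R : Type*) [CommRing R] (M : Type v) [AddCommGroup M]
    [Module R M] : Prop :=
  ∀ ⦃L N : Type v⦄ [AddCommGroup L] [Module R L] [AddCommGroup N] [Module R N]
    (f : L →ₗ[R] N), IsPureMono.{_, v, v, v} f →
      ∀ g : L →ₗ[R] M, ∃ h : N →ₗ[R] M, h.comp f = g

open TensorProduct

namespace PureInjAux

variable {R : Type*} [CommRing R]

section DualLemmas

variable {A B : Type*} [AddCommGroup A] [Module R A] [AddCommGroup B] [Module R B]

lemma dual_add (f g : A →ₗ[R] B) :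
    CharacterModule.dual (f + g) = CharacterModule.dual f + CharacterModule.dual g := by
  refine LinearMap.ext fun c => CharacterModule.ext _ fun a => ?_
  show c ((f + g) a) = c (f a) + c (g a)
  rw [LinearMap.add_apply, map_add]

lemma dual_smul (r : R) (f : A →ₗ[R] B) :
    CharacterModule.dual (r • f) = r • CharacterModule.dual f := by
  refine LinearMap.ext fun c => CharacterModule.ext _ fun a => ?_
  show c ((r • f) a) = c (f (r • a))
  rw [LinearMap.smul_apply]
  exact congrArg c (f.map_smul r a).symm

end DualLemmas

/-- Pure injectivity passes to retracts. -/
theorem pureInjective_of_retract {M P : Type v} [AddCommGroup M] [Module R M]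
    [AddCommGroup P] [Module R P] (s : M →ₗ[R] P) (r : P →ₗ[R] M)
    (hrs : r ∘ₗ s = LinearMap.id) (hP : IsPureInjective R P) :
    IsPureInjective R M := by
  intro L N _ _ _ _ f hf g
  obtain ⟨h, hh⟩ := hP f hf (s ∘ₗ g)
  refine ⟨r ∘ₗ h, ?_⟩
  ext x
  have h1 : h (f x) = s (g x) := congr($hh x)
  have h2 : r (s (g x)) = g x := congr($hrs (g x))
  simp [h1, h2]

/-- Character modules are pure injective. -/
theorem pureInjective_characterModule (B : Type v) [AddCommGroup B] [Module R B] :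
    IsPureInjective R (CharacterModule B) := by
  intro L N _ _ _ _ f hf g
  have hinj : Function.Injective (f.rTensor B) := by
    have h1 := hf.2 B
    have heq : f.rTensor B = (TensorProduct.comm R B N).toLinearMap ∘ₗ
        (f.lTensor B) ∘ₗ (TensorProduct.comm R L B).toLinearMap := by
      apply TensorProduct.ext'
      intro x b
      simp
    rw [heq]
    exact ((TensorProduct.comm R B N).injective.comp h1).comp
      (TensorProduct.comm R L B).injective
  obtain ⟨χ', hχ'⟩ := CharacterModule.dual_surjective_of_injective _ hinj
    (CharacterModule.homEquiv g)
  refine ⟨CharacterModule.homEquiv.symm χ', ?_⟩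
  have h2 := congr($(CharacterModule.dual_rTensor_conj_homEquiv N (B := B) f)
    (CharacterModule.homEquiv.symm χ'))
  simp only [LinearMap.comp_apply, LinearEquiv.coe_coe, LinearEquiv.apply_symm_apply,
    hχ', LinearEquiv.symm_apply_apply] at h2
  rw [LinearMap.lcomp_apply'] at h2
  exact h2.symm

section EvalChar

variable (R)

/-- Evaluation into the double character module. -/
noncomputable def evalChar (M : Type*) [AddCommGroup M] [Module R M] :
    M →ₗ[R] CharacterModule (CharacterModule M) where
  toFun x :=
    { toFun := fun c => c x
      map_zero' := rfl
      map_add' := fun _ _ => rfl }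
  map_add' x y := by
    refine CharacterModule.ext _ fun c => ?_
    exact map_add c x y
  map_smul' r x := by
    refine CharacterModule.ext _ fun c => ?_
    rfl

variable {R}

lemma evalChar_injective (M : Type*) [AddCommGroup M] [Module R M] :
    Function.Injective (evalChar R M) := by
  intro x y h
  rw [← sub_eq_zero]
  refine CharacterModule.eq_zero_of_character_apply fun c => ?_
  have hc : c x = c y := congr($h c)
  rw [map_sub, hc, sub_self]

/-- The comparison map `Y ⊗ M⋆⋆ → (Y ⊗ M)⋆⋆`. -/
noncomputable def sigma (Y M : Type*) [AddCommGroup Y] [Module R Y]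
    [AddCommGroup M] [Module R M] :
    Y ⊗[R] CharacterModule (CharacterModule M) →ₗ[R]
      CharacterModule (CharacterModule (Y ⊗[R] M)) :=
  TensorProduct.lift
    { toFun := fun y =>
        CharacterModule.dual (CharacterModule.dual (TensorProduct.mk R Y M y))
      map_add' := fun y y' => by simp only [map_add, dual_add]
      map_smul' := fun r y => by
        simp only [map_smul, dual_smul, RingHom.id_apply] }

lemma sigma_comp (Y M : Type*) [AddCommGroup Y] [Module R Y]
    [AddCommGroup M] [Module R M] :
    (sigma Y M) ∘ₗ (evalChar R M).lTensor Y = evalChar R (Y ⊗[R] M) := by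
  apply TensorProduct.ext'
  intro y x
  refine CharacterModule.ext _ fun ψ => ?_
  simp only [LinearMap.comp_apply, LinearMap.lTensor_tmul, sigma, TensorProduct.lift.tmul]
  rfl

lemma lTensor_evalChar_injective (Y M : Type*) [AddCommGroup Y] [Module R Y]
    [AddCommGroup M] [Module R M] :
    Function.Injective ((evalChar R M).lTensor Y) := by
  have h : Function.Injective (sigma Y M ∘ₗ (evalChar R M).lTensor Y) := by
    rw [sigma_comp]; exact evalChar_injective _
  rw [LinearMap.coe_comp] at h
  exact h.of_comp

lemma isPureMono_evalChar (M : Type*) [AddCommGroup M] [Module R M] :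
    IsPureMono (evalChar R M) :=
  ⟨evalChar_injective M, fun Y _ _ => lTensor_evalChar_injective Y M⟩

end EvalChar

section Theta

variable (R)

/-- The natural comparison map `M ⊗ B⋆ → Hom(M, B)⋆`. -/
noncomputable def theta (M B : Type*) [AddCommGroup M] [Module R M]
    [AddCommGroup B] [Module R B] :
    M ⊗[R] CharacterModule B →ₗ[R] CharacterModule (M →ₗ[R] B) :=
  TensorProduct.lift
    { toFun := fun m =>
        { toFun := fun c =>
            { toFun := fun φ => c (φ m)
              map_zero' := by simp
              map_add' := fun φ ψ => by simp }
          map_add' := fun c c' => rfl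
          map_smul' := fun r c => rfl }
      map_add' := fun m m' => by
        refine LinearMap.ext fun c => CharacterModule.ext _ fun φ => ?_
        show c (φ (m + m')) = c (φ m) + c (φ m')
        rw [map_add, map_add]
      map_smul' := fun r m => by
        refine LinearMap.ext fun c => CharacterModule.ext _ fun φ => ?_
        show c (φ (r • m)) = c (r • φ m)
        rw [map_smul] }

variable {R}

@[simp] lemma theta_tmul (M B : Type*) [AddCommGroup M] [Module R M]
    [AddCommGroup B] [Module R B] (m : M) (c : CharacterModule B) (φ : M →ₗ[R] B) :
    theta R M B (m ⊗ₜ[R] c) φ = c (φ m) := rfl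

lemma theta_naturality {M M' B : Type*} [AddCommGroup M] [Module R M]
    [AddCommGroup M'] [Module R M'] [AddCommGroup B] [Module R B] (u : M →ₗ[R] M') :
    theta R M' B ∘ₗ u.rTensor (CharacterModule B) =
      CharacterModule.dual (u.lcomp R B) ∘ₗ theta R M B := by
  apply TensorProduct.ext'
  intro m c
  refine CharacterModule.ext _ fun φ => ?_
  simp only [LinearMap.comp_apply, LinearMap.rTensor_tmul, theta_tmul,
    CharacterModule.dual_apply]
  rfl

variable (R)

lemma sum_single_smul {ι : Type*} [Fintype ι] [DecidableEq ι] (x : ι → R) :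
    ∑ i, x i • (Pi.single i (1 : R) : ι → R) = x := by
  funext j
  simp [Finset.sum_apply, Pi.single_apply]

lemma theta_bijective_pi (ι : Type*) [Fintype ι] [DecidableEq ι]
    (B : Type*) [AddCommGroup B] [Module R B] :
    Function.Bijective (theta R (ι → R) B) := by
  classical
  -- coordinate contraction maps
  let κ : ι → ((ι → R) ⊗[R] CharacterModule B →ₗ[R] CharacterModule B) := fun i =>
    TensorProduct.lift ((LinearMap.proj i).smulRight
      (LinearMap.id : CharacterModule B →ₗ[R] CharacterModule B))
  have hκ_tmul : ∀ (i : ι) (x : ι → R) (c : CharacterModule B),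
      κ i (x ⊗ₜ c) = x i • c := fun i x c => rfl
  -- evaluation of theta against the elementary maps
  have heval : ∀ (t : (ι → R) ⊗[R] CharacterModule B) (i : ι) (b : B),
      theta R (ι → R) B t ((LinearMap.proj i).smulRight b) = κ i t b := by
    intro t i b
    induction t using TensorProduct.induction_on with
    | zero => rfl
    | tmul x c => rfl
    | add s t hs ht =>
      have h : (theta R (ι → R) B) s ((LinearMap.proj i).smulRight b) +
          (theta R (ι → R) B) t ((LinearMap.proj i).smulRight b) =
          (κ i) s b + (κ i) t b := by rw [hs, ht]
      rw [map_add, map_add (κ i) s t]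
      exact h
  -- representation of tensors
  have hrep : ∀ t : (ι → R) ⊗[R] CharacterModule B,
      ∑ i, ((Pi.single i (1 : R) : ι → R)) ⊗ₜ[R] (κ i t) = t := by
    intro t
    induction t using TensorProduct.induction_on with
    | zero => simp
    | tmul x c =>
      have : ∀ i, ((Pi.single i (1 : R) : ι → R)) ⊗ₜ[R] (κ i (x ⊗ₜ c)) =
          ((x i • (Pi.single i (1 : R) : ι → R)) : ι → R) ⊗ₜ[R] c := by
        intro i
        rw [hκ_tmul, TensorProduct.smul_tmul]
      rw [Finset.sum_congr rfl fun i _ => this i, ← TensorProduct.sum_tmul,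
        sum_single_smul]
    | add s t hs ht =>
      simp only [map_add, TensorProduct.tmul_add, Finset.sum_add_distrib, hs, ht]
  constructor
  · -- injectivity
    intro t t' h
    rw [← sub_eq_zero]
    have h0 : theta R (ι → R) B (t - t') = 0 := by rw [map_sub, h, sub_self]
    have hκ0 : ∀ i, κ i (t - t') = 0 := by
      intro i
      refine CharacterModule.ext _ fun b => ?_
      rw [← heval, h0]
      rfl
    calc t - t' = ∑ i, ((Pi.single i (1 : R) : ι → R)) ⊗ₜ[R] (κ i (t - t')) := (hrep _).symm
      _ = 0 := by
          rw [Finset.sum_congr rfl fun i _ => by rw [hκ0 i]]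
          simp
  · -- surjectivity
    intro χ
    have hsr_zero : ∀ i : ι, (LinearMap.proj (R := R) (φ := fun _ : ι => R) i).smulRight
        (0 : B) = 0 := by
      intro i; ext x; simp
    have hsr_add : ∀ (i : ι) (b b' : B),
        (LinearMap.proj (R := R) (φ := fun _ : ι => R) i).smulRight (b + b') =
          (LinearMap.proj i).smulRight b + (LinearMap.proj i).smulRight b' := by
      intro i b b'; ext x; simp [smul_add]
    set cc : ι → CharacterModule B := fun i =>
      { toFun := fun b => χ ((LinearMap.proj i).smulRight b)
        map_zero' := by
          show χ ((LinearMap.proj i).smulRight (0 : B)) = 0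
          rw [hsr_zero i, map_zero]
        map_add' := fun b b' => by
          show χ ((LinearMap.proj i).smulRight (b + b')) =
            χ ((LinearMap.proj i).smulRight b) + χ ((LinearMap.proj i).smulRight b')
          rw [hsr_add i b b', map_add] } with hcc
    refine ⟨∑ i, ((Pi.single i (1 : R) : ι → R)) ⊗ₜ[R] cc i, ?_⟩
    refine CharacterModule.ext _ fun φ => ?_
    rw [map_sum]
    rw [show (∑ i, theta R (ι → R) B (((Pi.single i (1 : R) : ι → R)) ⊗ₜ[R] cc i)) φ =
        ∑ i, theta R (ι → R) B (((Pi.single i (1 : R) : ι → R)) ⊗ₜ[R] cc i) φ from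
      AddMonoidHom.finset_sum_apply
        (fun i => (theta R (ι → R) B (((Pi.single i (1 : R) : ι → R)) ⊗ₜ[R] cc i) :
          ((ι → R) →ₗ[R] B) →+ AddCircle (1 : ℚ))) Finset.univ φ]
    have hterm : ∀ i : ι, theta R (ι → R) B (((Pi.single i (1 : R) : ι → R)) ⊗ₜ[R] cc i) φ =
        χ ((LinearMap.proj i).smulRight (φ (Pi.single i (1 : R) : ι → R))) := fun i => rfl
    rw [Finset.sum_congr rfl fun i _ => hterm i, ← map_sum]
    congr 1
    refine LinearMap.ext fun x => ?_
    rw [LinearMap.sum_apply]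
    simp only [LinearMap.smulRight_apply, LinearMap.proj_apply]
    simp_rw [← map_smul]
    rw [← map_sum, sum_single_smul]

end Theta

/-- Precomposition with an exact pair (with surjective second map) gives an exact pair of
Hom-modules. -/
lemma exact_lcomp {F1 F0 A : Type*} [AddCommGroup F1] [Module R F1]
    [AddCommGroup F0] [Module R F0] [AddCommGroup A] [Module R A]
    (B : Type*) [AddCommGroup B] [Module R B]
    (p : F1 →ₗ[R] F0) (q : F0 →ₗ[R] A) (hpq : Function.Exact p q)
    (hq : Function.Surjective q) :
    Function.Exact (q.lcomp R B) (p.lcomp R B) := by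
  have hker_eq : LinearMap.ker q = LinearMap.range p := LinearMap.exact_iff.mp hpq
  intro φ
  constructor
  · intro h
    have hker : LinearMap.ker q ≤ LinearMap.ker φ := by
      rw [hker_eq]
      rintro _ ⟨y, rfl⟩
      have h1 : φ (p y) = 0 := congr($h y)
      simpa using h1
    refine ⟨((LinearMap.ker q).liftQ φ hker) ∘ₗ
      (q.quotKerEquivOfSurjective hq).symm.toLinearMap, ?_⟩
    refine LinearMap.ext fun x => ?_
    have hmk : (q.quotKerEquivOfSurjective hq).symm (q x) = Submodule.Quotient.mk x := by
      rw [LinearEquiv.symm_apply_eq]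
      rfl
    simp only [LinearMap.lcomp_apply, LinearMap.comp_apply, LinearEquiv.coe_coe, hmk,
      Submodule.liftQ_apply]
  · rintro ⟨ψ, rfl⟩
    refine LinearMap.ext fun y => ?_
    simp [hpq.apply_apply_eq_zero y]

/-- Taking character modules sends exact pairs to exact pairs. -/
lemma dual_exact {W1 W2 W3 : Type*} [AddCommGroup W1] [Module R W1]
    [AddCommGroup W2] [Module R W2] [AddCommGroup W3] [Module R W3]
    (u : W1 →ₗ[R] W2) (v : W2 →ₗ[R] W3) (huv : Function.Exact u v) :
    Function.Exact (CharacterModule.dual v) (CharacterModule.dual u) := by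
  have hker_eq : LinearMap.ker v = LinearMap.range u := LinearMap.exact_iff.mp huv
  intro χ
  constructor
  · intro hχ
    have hcongr : ∀ x y : W2, v x = v y → χ x = χ y := by
      intro x y hxy
      have hmem : x - y ∈ LinearMap.ker v := by
        rw [LinearMap.mem_ker, map_sub, hxy, sub_self]
      rw [hker_eq] at hmem
      obtain ⟨z, hz⟩ := hmem
      have h0 : χ (u z) = 0 := congr($hχ z)
      rw [hz, map_sub] at h0
      exact sub_eq_zero.mp h0
    have hpick : ∀ w : LinearMap.range v, ∃ x : W2, v x = (w : W3) := fun w =>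
      LinearMap.mem_range.mp w.2
    have hpickspec : ∀ w, v ((hpick w).choose) = (w : W3) := fun w => (hpick w).choose_spec
    have key : ∀ (w : LinearMap.range v) (x : W2), v x = (w : W3) →
        χ ((hpick w).choose) = χ x :=
      fun w x hx => hcongr _ _ ((hpickspec w).trans hx.symm)
    obtain ⟨χ', hχ'⟩ := CharacterModule.dual_surjective_of_injective _
      (Submodule.injective_subtype (LinearMap.range v))
      ({ toFun := fun w => χ ((hpick w).choose)
         map_zero' := by
           show χ ((hpick 0).choose) = 0
           rw [key 0 0 (by simp), map_zero]
         map_add' := fun w w' => by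
           show χ ((hpick (w + w')).choose) = χ ((hpick w).choose) + χ ((hpick w').choose)
           rw [key (w + w') ((hpick w).choose + (hpick w').choose)
             (by rw [map_add, hpickspec, hpickspec]; rfl), map_add] } :
        CharacterModule (LinearMap.range v))
    refine ⟨χ', ?_⟩
    refine CharacterModule.ext _ fun x => ?_
    have h1 := congr($hχ' (⟨v x, ⟨x, rfl⟩⟩ : LinearMap.range v))
    show χ' (v x) = χ x
    calc χ' (v x) = χ ((hpick ⟨v x, ⟨x, rfl⟩⟩).choose) := h1
      _ = χ x := key ⟨v x, ⟨x, rfl⟩⟩ x rfl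
  · rintro ⟨χ', rfl⟩
    refine CharacterModule.ext _ fun x => ?_
    show χ' (v (u x)) = 0
    rw [huv.apply_apply_eq_zero x, map_zero]

end PureInjAux

theorem pureInjective_tmul
    {R : Type v} [CommRing R] (A X : Type v)
    [AddCommGroup A] [Module R A] [Module.FinitePresentation R A]
    [AddCommGroup X] [Module R X] (hX : IsPureInjective R X) :
    IsPureInjective R (TensorProduct R A X) := by
  classical
  open PureInjAux in
  -- a finite presentation of `A`
  obtain ⟨n, q, hq⟩ := Module.Finite.exists_fin' R A
  have hfg : (LinearMap.ker q).FG := Module.FinitePresentation.fg_ker q hq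
  obtain ⟨m, w, hw⟩ := Submodule.fg_iff_exists_fin_generating_family.mp hfg
  let p : (Fin m → R) →ₗ[R] (Fin n → R) := Fintype.linearCombination R w
  have hrange : LinearMap.range p = LinearMap.ker q := by
    rw [← hw]
    apply le_antisymm
    · rintro _ ⟨x, rfl⟩
      rw [Fintype.linearCombination_apply]
      exact Submodule.sum_mem _ fun i _ => Submodule.smul_mem _ _
        (Submodule.subset_span (Set.mem_range_self i))
    · rw [Submodule.span_le]
      rintro _ ⟨i, rfl⟩
      exact ⟨Pi.single i 1, by simp [p, Fintype.linearCombination_apply_single]⟩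
  have hpq : Function.Exact p q := LinearMap.exact_iff.mpr hrange.symm
  -- the `B` we dualize against
  let B := CharacterModule X
  -- the comparison map for `A` is bijective (five lemma)
  have hθ0 := theta_bijective_pi R (Fin n) B
  have hθ1 := theta_bijective_pi R (Fin m) B
  have htop : Function.Exact (p.rTensor (CharacterModule B))
      (q.rTensor (CharacterModule B)) := rTensor_exact _ hpq hq
  have htopsurj : Function.Surjective (q.rTensor (CharacterModule B)) :=
    LinearMap.rTensor_surjective _ hq
  have hbot : Function.Exact (CharacterModule.dual (p.lcomp R B))
      (CharacterModule.dual (q.lcomp R B)) :=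
    dual_exact _ _ (exact_lcomp B p q hpq hq)
  have hlcomp_inj : Function.Injective (q.lcomp R B) := by
    intro φ ψ h
    refine LinearMap.ext fun a => ?_
    obtain ⟨x, rfl⟩ := hq a
    exact congr($h x)
  have hbotsurj : Function.Surjective (CharacterModule.dual (q.lcomp R B)) :=
    CharacterModule.dual_surjective_of_injective _ hlcomp_inj
  have hsq0 := theta_naturality (B := B) p
  have hsqA := theta_naturality (B := B) q
  have hθA : Function.Bijective (theta R A B) := by
    constructor
    · intro t t' h
      rw [← sub_eq_zero]
      obtain ⟨x, hx⟩ := htopsurj (t - t')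
      have h1 : CharacterModule.dual (q.lcomp R B) (theta R (Fin n → R) B x) = 0 := by
        have h2 := congr($hsqA x)
        simp only [LinearMap.comp_apply] at h2
        rw [hx] at h2
        rw [← h2, map_sub, h, sub_self]
      obtain ⟨z, hz⟩ := (hbot _).mp h1
      obtain ⟨w₁, rfl⟩ := hθ1.2 z
      have h3 : theta R (Fin n → R) B (p.rTensor (CharacterModule B) w₁) =
          theta R (Fin n → R) B x := by
        have h4 := congr($hsq0 w₁)
        simp only [LinearMap.comp_apply] at h4
        rw [h4, hz]
      have h5 : p.rTensor (CharacterModule B) w₁ = x := hθ0.1 h3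
      rw [← hx, ← h5]
      exact htop.apply_apply_eq_zero w₁
    · intro χ
      obtain ⟨y, hy⟩ := hbotsurj χ
      obtain ⟨x, rfl⟩ := hθ0.2 y
      refine ⟨q.rTensor (CharacterModule B) x, ?_⟩
      have h2 := congr($hsqA x)
      simp only [LinearMap.comp_apply] at h2
      rw [h2, hy]
  -- hence `A ⊗ X⋆⋆` is pure injective
  let E : (A ⊗[R] CharacterModule B) ≃ₗ[R] CharacterModule (A →ₗ[R] B) :=
    LinearEquiv.ofBijective _ hθA
  have hPI : IsPureInjective R (A ⊗[R] CharacterModule B) :=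
    pureInjective_of_retract E.toLinearMap E.symm.toLinearMap
      (by ext t; simp [E]) (pureInjective_characterModule (A →ₗ[R] B))
  -- `X` is a retract of `X⋆⋆`, hence `A ⊗ X` is a retract of `A ⊗ X⋆⋆`
  obtain ⟨rr, hrr⟩ := hX (evalChar R X) (isPureMono_evalChar X) LinearMap.id
  exact pureInjective_of_retract ((evalChar R X).lTensor A) (rr.lTensor A)
    (by rw [← LinearMap.lTensor_comp, hrr, LinearMap.lTensor_id]) hPI
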